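/- Let m, s be nonzero complex numbers and r a complex number. With A = !![m, 1; 0, m⁻¹] and B = !![s, 0; r, s⁻¹] in SL₂(ℂ) and W = B·A·B⁻¹·A⁻¹·B⁻¹·A·B, the matrices W and A commute (W·A = A·W) if and only if q(m,s,r) = 0 or (r = 0 and (s = 1 or s = −1)), where q(m,s,r) = r − m²r + ms − m³s + 2mr²s − m³r²s − rs² + 4m²rs² − m⁴rs² + m²r³s² − ms³ + m³s³ − mr²s³ + 2m³r²s³ − m²rs⁴ + m⁴rs⁴. -/

import Mathlib

set_option maxHeartbeats 1000000


/-- The common factor `p` (up to a unit) of the defining equations of the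
representation variety of the Whitehead link group. -/
noncomputable def q (m s r : ℂ) : ℂ :=
  r - m^2*r + m*s - m^3*s + 2*m*r^2*s - m^3*r^2*s - r*s^2 + 4*m^2*r*s^2
    - m^4*r*s^2 + m^2*r^3*s^2 - m*s^3 + m^3*s^3 - m*r^2*s^3 + 2*m^3*r^2*s^3
    - m^2*r*s^4 + m^4*r*s^4

theorem whitehead_rep_variety_decomposition (m s r : ℂ) (hm : m ≠ 0) (hs : s ≠ 0)
    (A B W : Matrix (Fin 2) (Fin 2) ℂ)
    (hA : A = !![m, 1; 0, m⁻¹]) (hB : B = !![s, 0; r, s⁻¹])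
    (hW : W = B * A * B⁻¹ * A⁻¹ * B⁻¹ * A * B) :
    W * A = A * W ↔ q m s r = 0 ∨ (r = 0 ∧ (s = 1 ∨ s = -1)) := by
  subst hA hB hW
  have hu : m * m⁻¹ = 1 := mul_inv_cancel₀ hm
  have hv : s * s⁻¹ = 1 := mul_inv_cancel₀ hs
  have hAi : (!![m, 1; 0, m⁻¹] : Matrix (Fin 2) (Fin 2) ℂ)⁻¹ = !![m⁻¹, -1; 0, m] := by
    apply Matrix.inv_eq_right_inv
    ext i j
    fin_cases i <;> fin_cases j <;>
      simp [Matrix.mul_apply, Fin.sum_univ_two] <;> field_simp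
  have hBi : (!![s, 0; r, s⁻¹] : Matrix (Fin 2) (Fin 2) ℂ)⁻¹ = !![s⁻¹, 0; -r, s] := by
    apply Matrix.inv_eq_right_inv
    ext i j
    fin_cases i <;> fin_cases j <;>
      simp [Matrix.mul_apply, Fin.sum_univ_two] <;> field_simp <;> ring
  rw [hAi, hBi]
  have key : !![s, 0; r, s⁻¹] * !![m, 1; 0, m⁻¹] * !![s⁻¹, 0; -r, s] * !![m⁻¹, -1; 0, m] *
        !![s⁻¹, 0; -r, s] * !![m, 1; 0, m⁻¹] * !![s, 0; r, s⁻¹] * !![m, 1; 0, m⁻¹]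
      - !![m, 1; 0, m⁻¹] * (!![s, 0; r, s⁻¹] * !![m, 1; 0, m⁻¹] * !![s⁻¹, 0; -r, s] *
        !![m⁻¹, -1; 0, m] * !![s⁻¹, 0; -r, s] * !![m, 1; 0, m⁻¹] * !![s, 0; r, s⁻¹]) =
      !![q m s r * r * (m⁻¹)^2 * (s⁻¹)^2, q m s r * (1 - s^2) * (m⁻¹)^2 * (s⁻¹)^3;
         q m s r * r * (1 - m^2) * (m⁻¹)^3 * (s⁻¹)^2, -(q m s r * r * (m⁻¹)^2 * (s⁻¹)^2)] := by
    ext i j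
    fin_cases i <;> fin_cases j <;>
      simp [Matrix.sub_apply, q]
    · linear_combination (4*s*s⁻¹*r^2 - s^2*r^2 - 4*s^2*s⁻¹^2*r^2 - s^2*s⁻¹^2*r^4 + s^4*s⁻¹^2*r^2 - 2*m⁻¹*s*s⁻¹^2*r^3 - m⁻¹*s^2*s⁻¹*r + m⁻¹*s^3*s⁻¹^2*r + m⁻¹*s^3*s⁻¹^2*r^3 + m*s*s⁻¹^2*r^3 + m*s^2*s⁻¹*r - m*s^3*s⁻¹^2*r - 2*m*s^3*s⁻¹^2*r^3 + m*m⁻¹*s⁻¹^2*r^2 - 4*m*m⁻¹*s^2*s⁻¹^2*r^2 - m*m⁻¹*s^2*s⁻¹^2*r^4 + m*m⁻¹*s^4*s⁻¹^2*r^2 + m^2*s^2*s⁻¹^2*r^2 - m^2*s^4*s⁻¹^2*r^2 + m^2*m⁻¹*s*s⁻¹^2*r + m^2*m⁻¹*s*s⁻¹^2*r^3 - m^2*m⁻¹*s^3*s⁻¹^2*r - 2*m^2*m⁻¹*s^3*s⁻¹^2*r^3 + m^3*m⁻¹*s^2*s⁻¹^2*r^2 - m^3*m⁻¹*s^4*s⁻¹^2*r^2)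 * hu + (-r^4 - 4*s*s⁻¹*r^2 - s*s⁻¹*r^4 + s^2*r^2 + s^3*s⁻¹*r^2 - 2*m⁻¹*s⁻¹*r^3 + m⁻¹*s*r^3 + m⁻¹*s^2*s⁻¹*r + m⁻¹*s^2*s⁻¹*r^3 + m⁻¹^2*s*s⁻¹*r^2 + m*s⁻¹*r^3 - 2*m*s*r^3 - m*s^2*s⁻¹*r - 2*m*s^2*s⁻¹*r^3 + m^2*s*s⁻¹*r^2 - m^2*s^2*r^2 - m^2*s^3*s⁻¹*r^2) * hv
    · linear_combination (5*s*s⁻¹^2*r - 5*s^2*s⁻¹*r - 5*s^2*s⁻¹^3*r - s^2*s⁻¹^3*r^3 + s^3*r + 5*s^4*s⁻¹^3*r + s^4*s⁻¹^3*r^3 - s^6*s⁻¹^3*r - 2*m⁻¹*s*s⁻¹^3*r^2 - 2*m⁻¹*s^2*s⁻¹^2 + m⁻¹*s^3*s⁻¹ + 2*m⁻¹*s^3*s⁻¹^3 + 3*m⁻¹*s^3*s⁻¹^3*r^2 - m⁻¹*s^5*s⁻¹^3 - m⁻¹*s^5*s⁻¹^3*r^2 + m*s*s⁻¹^3*r^2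 + 2*m*s^2*s⁻¹^2 - m*s^3*s⁻¹ - 2*m*s^3*s⁻¹^3 - 3*m*s^3*s⁻¹^3*r^2 + m*s^5*s⁻¹^3 + 2*m*s^5*s⁻¹^3*r^2 + m*m⁻¹*s⁻¹^3*r - 5*m*m⁻¹*s^2*s⁻¹^3*r - m*m⁻¹*s^2*s⁻¹^3*r^3 + 5*m*m⁻¹*s^4*s⁻¹^3*r + m*m⁻¹*s^4*s⁻¹^3*r^3 - m*m⁻¹*s^6*s⁻¹^3*r + m^2*s^2*s⁻¹^3*r - 2*m^2*s^4*s⁻¹^3*r + m^2*s^6*s⁻¹^3*r + m^2*m⁻¹*s*s⁻¹^3 + m^2*m⁻¹*s*s⁻¹^3*r^2 - 2*m^2*m⁻¹*s^3*s⁻¹^3 - 3*m^2*m⁻¹*s^3*s⁻¹^3*r^2 + m^2*m⁻¹*s^5*s⁻¹^3 + 2*m^2*m⁻¹*s^5*s⁻¹^3*r^2 + m^3*m⁻¹*s^2*s⁻¹^3*r - 2*m^3*m⁻¹*s^4*s⁻¹^3*r + m^3*m⁻¹*s^6*s⁻¹^3*r) * hu + (-s⁻¹*r^3 + s*r^3 -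 5*s*s⁻¹^2*r - s*s⁻¹^2*r^3 + 5*s^2*s⁻¹*r + s^2*s⁻¹*r^3 - s^3*r + 5*s^3*s⁻¹^2*r + s^3*s⁻¹^2*r^3 - s^4*s⁻¹*r - s^5*s⁻¹^2*r - 2*m⁻¹*s⁻¹^2*r^2 + 3*m⁻¹*s*s⁻¹*r^2 - m⁻¹*s^2*r^2 + 2*m⁻¹*s^2*s⁻¹^2 + 3*m⁻¹*s^2*s⁻¹^2*r^2 - m⁻¹*s^3*s⁻¹ - m⁻¹*s^3*s⁻¹*r^2 - m⁻¹*s^4*s⁻¹^2 - m⁻¹*s^4*s⁻¹^2*r^2 + 2*m⁻¹^2*s*s⁻¹^2*r - m⁻¹^2*s^2*s⁻¹*r - m⁻¹^2*s^3*s⁻¹^2*r + m*s⁻¹^2*r^2 - 3*m*s*s⁻¹*r^2 + 2*m*s^2*r^2 - 2*m*s^2*s⁻¹^2 - 3*m*s^2*s⁻¹^2*r^2 + m*s^3*s⁻¹ + 2*m*s^3*s⁻¹*r^2 + m*s^4*s⁻¹^2 + 2*m*s^4*s⁻¹^2*r^2 + m^2*s*s⁻¹^2*r - 2*m^2*s^2*s⁻¹*r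 + m^2*s^3*r - 2*m^2*s^3*s⁻¹^2*r + m^2*s^4*s⁻¹*r + m^2*s^5*s⁻¹^2*r) * hv
    · linear_combination (-3*s⁻¹*r^3 + 3*s*r^3 + 3*s*s⁻¹^2*r^3 + 2*s^2*s⁻¹*r - 2*s^3*s⁻¹^2*r - 3*s^3*s⁻¹^2*r^3 + 5*m⁻¹*s*s⁻¹*r^2 - m⁻¹*s^2*r^2 - 5*m⁻¹*s^2*s⁻¹^2*r^2 - m⁻¹*s^2*s⁻¹^2*r^4 + m⁻¹*s^4*s⁻¹^2*r^2 - 2*m⁻¹^2*s*s⁻¹^2*r^3 - m⁻¹^2*s^2*s⁻¹*r + m⁻¹^2*s^3*s⁻¹^2*r + m⁻¹^2*s^3*s⁻¹^2*r^3 - 5*m*s*s⁻¹*r^2 + 2*m*s^2*r^2 + 5*m*s^2*s⁻¹^2*r^2 + m*s^2*s⁻¹^2*r^4 - 2*m*s^4*s⁻¹^2*r^2 + 3*m*m⁻¹*s*s⁻¹^2*r^3 + 2*m*m⁻¹*s^2*s⁻¹*r - 2*m*m⁻¹*s^3*s⁻¹^2*r - 3*m*m⁻¹*s^3*s⁻¹^2*r^3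 + 2*m*m⁻¹^2*s⁻¹^2*r^2 - 5*m*m⁻¹^2*s^2*s⁻¹^2*r^2 - m*m⁻¹^2*s^2*s⁻¹^2*r^4 + m*m⁻¹^2*s^4*s⁻¹^2*r^2 - m^2*s*s⁻¹^2*r^3 - m^2*s^2*s⁻¹*r + m^2*s^3*s⁻¹^2*r + 2*m^2*s^3*s⁻¹^2*r^3 - m^2*m⁻¹*s⁻¹^2*r^2 + 5*m^2*m⁻¹*s^2*s⁻¹^2*r^2 + m^2*m⁻¹*s^2*s⁻¹^2*r^4 - 2*m^2*m⁻¹*s^4*s⁻¹^2*r^2 + 2*m^2*m⁻¹^2*s*s⁻¹^2*r + 3*m^2*m⁻¹^2*s*s⁻¹^2*r^3 - 2*m^2*m⁻¹^2*s^3*s⁻¹^2*r - 3*m^2*m⁻¹^2*s^3*s⁻¹^2*r^3 - m^3*s^2*s⁻¹^2*r^2 + m^3*s^4*s⁻¹^2*r^2 - m^3*m⁻¹*s*s⁻¹^2*r - m^3*m⁻¹*s*s⁻¹^2*r^3 + m^3*m⁻¹*s^3*s⁻¹^2*r + 2*m^3*m⁻¹*s^3*s⁻¹^2*r^3 - m^3*m⁻¹^2*s⁻¹^2*r^2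 + 5*m^3*m⁻¹^2*s^2*s⁻¹^2*r^2 + m^3*m⁻¹^2*s^2*s⁻¹^2*r^4 - 2*m^3*m⁻¹^2*s^4*s⁻¹^2*r^2 - m^4*m⁻¹*s^2*s⁻¹^2*r^2 + m^4*m⁻¹*s^4*s⁻¹^2*r^2 - m^4*m⁻¹^2*s*s⁻¹^2*r - m^4*m⁻¹^2*s*s⁻¹^2*r^3 + m^4*m⁻¹^2*s^3*s⁻¹^2*r + 2*m^4*m⁻¹^2*s^3*s⁻¹^2*r^3 - m^5*m⁻¹^2*s^2*s⁻¹^2*r^2 + m^5*m⁻¹^2*s^4*s⁻¹^2*r^2) * hu + (3*s⁻¹*r^3 - 3*s*r^3 - 2*s^2*s⁻¹*r - 3*s^2*s⁻¹*r^3 - m⁻¹*r^4 - 5*m⁻¹*s*s⁻¹*r^2 - m⁻¹*s*s⁻¹*r^4 + m⁻¹*s^2*r^2 + m⁻¹*s^3*s⁻¹*r^2 - 2*m⁻¹^2*s⁻¹*r^3 + m⁻¹^2*s*r^3 + m⁻¹^2*s^2*s⁻¹*r + m⁻¹^2*s^2*s⁻¹*r^3 + m⁻¹^3*s*s⁻¹*r^2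 + m*r^4 + 5*m*s*s⁻¹*r^2 + m*s*s⁻¹*r^4 - 2*m*s^2*r^2 - 2*m*s^3*s⁻¹*r^2 - m^2*s⁻¹*r^3 + 2*m^2*s*r^3 + m^2*s^2*s⁻¹*r + 2*m^2*s^2*s⁻¹*r^3 - m^3*s*s⁻¹*r^2 + m^3*s^2*r^2 + m^3*s^3*s⁻¹*r^2) * hv
    · linear_combination (-4*s*s⁻¹*r^2 + s^2*r^2 + 4*s^2*s⁻¹^2*r^2 + s^2*s⁻¹^2*r^4 - s^4*s⁻¹^2*r^2 + 2*m⁻¹*s*s⁻¹^2*r^3 + m⁻¹*s^2*s⁻¹*r - m⁻¹*s^3*s⁻¹^2*r - m⁻¹*s^3*s⁻¹^2*r^3 - m*s*s⁻¹^2*r^3 - m*s^2*s⁻¹*r + m*s^3*s⁻¹^2*r + 2*m*s^3*s⁻¹^2*r^3 - m*m⁻¹*s⁻¹^2*r^2 + 4*m*m⁻¹*s^2*s⁻¹^2*r^2 + m*m⁻¹*s^2*s⁻¹^2*r^4 - m*m⁻¹*s^4*s⁻¹^2*r^2 - m^2*s^2*s⁻¹^2*r^2 + m^2*s^4*s⁻¹^2*r^2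 - m^2*m⁻¹*s*s⁻¹^2*r - m^2*m⁻¹*s*s⁻¹^2*r^3 + m^2*m⁻¹*s^3*s⁻¹^2*r + 2*m^2*m⁻¹*s^3*s⁻¹^2*r^3 - m^3*m⁻¹*s^2*s⁻¹^2*r^2 + m^3*m⁻¹*s^4*s⁻¹^2*r^2) * hu + (r^4 + 4*s*s⁻¹*r^2 + s*s⁻¹*r^4 - s^2*r^2 - s^3*s⁻¹*r^2 + 2*m⁻¹*s⁻¹*r^3 - m⁻¹*s*r^3 - m⁻¹*s^2*s⁻¹*r - m⁻¹*s^2*s⁻¹*r^3 - m⁻¹^2*s*s⁻¹*r^2 - m*s⁻¹*r^3 + 2*m*s*r^3 + m*s^2*s⁻¹*r + 2*m*s^2*s⁻¹*r^3 - m^2*s*s⁻¹*r^2 + m^2*s^2*r^2 + m^2*s^3*s⁻¹*r^2) * hv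
  rw [← sub_eq_zero, key]
  constructor
  · intro h
    have h00 : q m s r * r * (m⁻¹)^2 * (s⁻¹)^2 = 0 := by
      have := congrFun (congrFun h 0) 0; simpa using this
    have h01 : q m s r * (1 - s^2) * (m⁻¹)^2 * (s⁻¹)^3 = 0 := by
      have := congrFun (congrFun h 0) 1; simpa using this
    have hqr : q m s r * r = 0 := by
      have e : q m s r * r * (m⁻¹)^2 * (s⁻¹)^2 * (m^2 * s^2) = q m s r * r := by
        field_simp
      rw [← e, h00, zero_mul]
    have hqs : q m s r * (1 - s^2) = 0 := by
      have e : q m s r * (1 - s^2) * (m⁻¹)^2 * (s⁻¹)^3 * (m^2 * s^3) = q m s r * (1 - s^2) := by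
        field_simp
      rw [← e, h01, zero_mul]
    by_cases hq : q m s r = 0
    · exact Or.inl hq
    · refine Or.inr ⟨(mul_eq_zero.mp hqr).resolve_left hq, ?_⟩
      have hs2 : (s - 1) * (s + 1) = 0 := by
        have h2 := (mul_eq_zero.mp hqs).resolve_left hq
        linear_combination -h2
      rcases mul_eq_zero.mp hs2 with h' | h'
      · exact Or.inl (sub_eq_zero.mp h')
      · exact Or.inr (eq_neg_of_add_eq_zero_left h')
  · rintro (hq | ⟨hr, hs1⟩)
    · rw [hq]
      ext i j
      fin_cases i <;> fin_cases j <;> simp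
    · have hs2 : 1 - s^2 = 0 := by rcases hs1 with h | h <;> rw [h] <;> ring
      rw [hr, hs2]
      ext i j
      fin_cases i <;> fin_cases j <;> simp
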